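/- Let E be a Dedekind complete (conditionally complete) locally solid vector lattice, let U be a solid neighborhood of 0 in E, and let (T_α), (S_α) be nets of linear operators on E (over the same directed index set) converging order-uniformly on U to linear operators T and S respectively. Assume that each T_α, each S_α, T and S map U into an order bounded set. For a linear operator R, S' and 0 ≤ x set F(R,S')(x) := sup { R u + S' v : 0 ≤ u, 0 ≤ v, u + v = x }. Then for every a ∈ E with 0 ≤ a there is an index α₀ such that for all α ≥ α₀ and all x ∈ U with 0 ≤ x one has |F(T_α,S_α)(x) − F(T,S)(x)| ≤ a; i.e., the Riesz–Kantorovich suprema F(T_α,S_α) converge to F(T,S) order-uniformly on U ∩ E₊. -/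

import Mathlib

open Filter Topology Pointwise

/-- The Riesz–Kantorovich expression: `F(R,S)(x) = sup {R u + S v : 0 ≤ u, 0 ≤ v, u + v = x}`. -/
noncomputable def RKsup {E : Type*} [ConditionallyCompleteLattice E] [AddCommGroup E]
    [Module ℝ E] (R S : E →ₗ[ℝ] E) (x : E) : E :=
  sSup {z : E | ∃ u v : E, 0 ≤ u ∧ 0 ≤ v ∧ u + v = x ∧ z = R u + S v}

/-- In a Dedekind complete locally solid vector lattice `E`, if `U` is a solid
neighborhood of `0` and `(T α) → T₀`, `(S α) → S₀` order-uniformly on `U`, with all operators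
mapping `U` into order bounded sets, then the Riesz–Kantorovich suprema `F(T α, S α)` converge
to `F(T₀, S₀)` order-uniformly on `U ∩ E₊`. -/
theorem rksup_orderUnifConv
    {E : Type*} [ConditionallyCompleteLattice E] [AddCommGroup E] [Module ℝ E]
    [CovariantClass E E (· + ·) (· ≤ ·)] [PosSMulMono ℝ E]
    [TopologicalSpace E] [IsTopologicalAddGroup E] [ContinuousSMul ℝ E]
    (hsolid : ∀ W ∈ 𝓝 (0 : E), ∃ W' ∈ 𝓝 (0 : E), W' ⊆ W ∧
      ∀ x y : E, y ∈ W' → |x| ≤ |y| → x ∈ W')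
    {ι : Type*} [Nonempty ι] [SemilatticeSup ι]
    (U : Set E) (hU : U ∈ 𝓝 (0 : E))
    (hUsolid : ∀ x y : E, y ∈ U → |x| ≤ |y| → x ∈ U)
    (T S : ι → E →ₗ[ℝ] E) (T₀ S₀ : E →ₗ[ℝ] E)
    (hTob : ∀ α : ι, ∃ a : E, 0 ≤ a ∧ (T α) '' U ⊆ Set.Icc (-a) a)
    (hSob : ∀ α : ι, ∃ a : E, 0 ≤ a ∧ (S α) '' U ⊆ Set.Icc (-a) a)
    (hT₀ob : ∃ a : E, 0 ≤ a ∧ T₀ '' U ⊆ Set.Icc (-a) a)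
    (hS₀ob : ∃ a : E, 0 ≤ a ∧ S₀ '' U ⊆ Set.Icc (-a) a)
    (hT : ∀ a : E, 0 ≤ a → ∃ α₀ : ι, ∀ α ≥ α₀, ∀ x ∈ U, |T α x - T₀ x| ≤ a)
    (hS : ∀ a : E, 0 ≤ a → ∃ α₀ : ι, ∀ α ≥ α₀, ∀ x ∈ U, |S α x - S₀ x| ≤ a) :
    ∀ a : E, 0 ≤ a → ∃ α₀ : ι, ∀ α ≥ α₀, ∀ x ∈ U, 0 ≤ x →
      |RKsup (T α) (S α) x - RKsup T₀ S₀ x| ≤ a := by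
  intro a ha
  have hha : (0:E) ≤ (1/2 : ℝ) • a := smul_nonneg (by norm_num) ha
  have hsum : (1/2 : ℝ) • a + (1/2 : ℝ) • a = a := by
    rw [← add_smul]; norm_num
  obtain ⟨α₁, hα₁⟩ := hT _ hha
  obtain ⟨α₂, hα₂⟩ := hS _ hha
  refine ⟨α₁ ⊔ α₂, fun α hα x hxU hx => ?_⟩
  -- decompositions lie in U
  have hmem : ∀ u v : E, 0 ≤ u → 0 ≤ v → u + v = x → u ∈ U ∧ v ∈ U := by
    intro u v hu hv huv
    have hux : u ≤ x := by
      calc u ≤ u + v := le_add_of_nonneg_right hv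
      _ = x := huv
    have hvx : v ≤ x := by
      calc v ≤ u + v := le_add_of_nonneg_left hu
      _ = x := huv
    exact ⟨hUsolid u x hxU (by rwa [abs_of_nonneg hu, abs_of_nonneg hx]),
      hUsolid v x hxU (by rwa [abs_of_nonneg hv, abs_of_nonneg hx])⟩
  -- general comparison lemma
  have key : ∀ (R₁ Q₁ R₂ Q₂ : E →ₗ[ℝ] E),
      (∃ b : E, 0 ≤ b ∧ R₂ '' U ⊆ Set.Icc (-b) b) →
      (∃ b : E, 0 ≤ b ∧ Q₂ '' U ⊆ Set.Icc (-b) b) →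
      (∀ u ∈ U, |R₁ u - R₂ u| ≤ (1/2:ℝ) • a) →
      (∀ v ∈ U, |Q₁ v - Q₂ v| ≤ (1/2:ℝ) • a) →
      RKsup R₁ Q₁ x ≤ RKsup R₂ Q₂ x + a := by
    intro R₁ Q₁ R₂ Q₂ ⟨bR, _, hbR⟩ ⟨bQ, _, hbQ⟩ hR hQ
    have hbdd : BddAbove {z : E | ∃ u v : E, 0 ≤ u ∧ 0 ≤ v ∧ u + v = x ∧ z = R₂ u + Q₂ v} := by
      refine ⟨bR + bQ, fun z hz => ?_⟩
      obtain ⟨u, v, hu, hv, huv, rfl⟩ := hz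
      obtain ⟨hUu, hUv⟩ := hmem u v hu hv huv
      exact add_le_add (hbR ⟨u, hUu, rfl⟩).2 (hbQ ⟨v, hUv, rfl⟩).2
    have hne : {z : E | ∃ u v : E, 0 ≤ u ∧ 0 ≤ v ∧ u + v = x ∧ z = R₁ u + Q₁ v}.Nonempty :=
      ⟨R₁ 0 + Q₁ x, 0, x, le_refl 0, hx, zero_add x, rfl⟩
    refine csSup_le hne ?_
    rintro z ⟨u, v, hu, hv, huv, rfl⟩
    obtain ⟨hUu, hUv⟩ := hmem u v hu hv huv
    have h1 : R₁ u ≤ R₂ u + (1/2:ℝ) • a :=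
      sub_le_iff_le_add'.mp (by rw [add_comm] at *; exact (le_abs_self _).trans (hR u hUu))
    have h2 : Q₁ v ≤ Q₂ v + (1/2:ℝ) • a :=
      sub_le_iff_le_add'.mp ((le_abs_self _).trans (hQ v hUv))
    have h3 : R₂ u + Q₂ v ≤ RKsup R₂ Q₂ x :=
      le_csSup hbdd ⟨u, v, hu, hv, huv, rfl⟩
    calc R₁ u + Q₁ v ≤ (R₂ u + (1/2:ℝ) • a) + (Q₂ v + (1/2:ℝ) • a) := add_le_add h1 h2
      _ = (R₂ u + Q₂ v) + ((1/2:ℝ) • a + (1/2:ℝ) • a) := add_add_add_comm _ _ _ _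
      _ = (R₂ u + Q₂ v) + a := by rw [hsum]
      _ ≤ RKsup R₂ Q₂ x + a := add_le_add_left h3 a
  have hTα : ∀ u ∈ U, |T α u - T₀ u| ≤ (1/2:ℝ) • a := hα₁ α (le_trans le_sup_left hα)
  have hSα : ∀ v ∈ U, |S α v - S₀ v| ≤ (1/2:ℝ) • a := hα₂ α (le_trans le_sup_right hα)
  have hTα' : ∀ u ∈ U, |T₀ u - T α u| ≤ (1/2:ℝ) • a := fun u hu => by
    rw [abs_sub_comm]; exact hTα u hu
  have hSα' : ∀ v ∈ U, |S₀ v - S α v| ≤ (1/2:ℝ) • a := fun v hv => by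
    rw [abs_sub_comm]; exact hSα v hv
  have k1 := key (T α) (S α) T₀ S₀ hT₀ob hS₀ob hTα hSα
  have k2 := key T₀ S₀ (T α) (S α) (hTob α) (hSob α) hTα' hSα'
  refine abs_le'.mpr ⟨sub_le_iff_le_add'.mpr k1, ?_⟩
  rw [neg_sub]
  exact sub_le_iff_le_add'.mpr k2
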